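/- Let ℓ be an odd prime and m ≥ 1. Then every element of R(ℓ^{2m+1}) has square discriminant, and there is no primitive vector in (Z/ℓ^{2m+1}Z)² that is a simultaneous eigenvector of all elements of R(ℓ^{2m+1}). -/

import Mathlib

/-- A vector in `(ZMod N)²` is primitive (w.r.t. `ℓ ∣ N`) if its reduction
modulo `ℓ` is nonzero. -/
def IsPrimitive (ℓ N : ℕ) (h : ℓ ∣ N) (v : Fin 2 → ZMod N) : Prop :=
  (fun i => ZMod.castHom h (ZMod ℓ) (v i)) ≠ 0

/-- Membership in the group `R(ℓ^(2m+1))`: matrices `[[r, s],[ε·ℓ^(2m)·s, ε·t]]` with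
`ε = ±1` and `r ≡ t (mod ℓ^(m+1))`. -/
def Rmem (ℓ m : ℕ) (g : Matrix (Fin 2) (Fin 2) (ZMod (ℓ ^ (2 * m + 1)))) : Prop :=
  ∃ (r s t ε : ZMod (ℓ ^ (2 * m + 1))), (ε = 1 ∨ ε = -1) ∧
    g = !![r, s; ε * (ℓ : ZMod (ℓ ^ (2 * m + 1))) ^ (2 * m) * s, ε * t] ∧
    ZMod.castHom (pow_dvd_pow ℓ (by omega : m + 1 ≤ 2 * m + 1)) (ZMod (ℓ ^ (m + 1))) r =
      ZMod.castHom (pow_dvd_pow ℓ (by omega : m + 1 ≤ 2 * m + 1)) (ZMod (ℓ ^ (m + 1))) t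

lemma isUnit_of_cast_ne' {ℓ k : ℕ} (hℓ : ℓ.Prime) (hk : k ≠ 0) (x : ZMod (ℓ ^ k))
    (h : ZMod.castHom (dvd_pow_self ℓ hk) (ZMod ℓ) x ≠ 0) : IsUnit x := by
  have hne : NeZero (ℓ ^ k) := ⟨pow_ne_zero k hℓ.pos.ne'⟩
  have hv : ((x.val : ℕ) : ZMod ℓ) ≠ 0 := by
    rwa [ZMod.castHom_apply, ← ZMod.natCast_val] at h
  have hdvd : ¬ ℓ ∣ x.val := fun hd => hv ((ZMod.natCast_eq_zero_iff _ _).mpr hd)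
  have : IsUnit ((x.val : ℕ) : ZMod (ℓ ^ k)) :=
    (ZMod.isUnit_iff_coprime _ _).mpr (Nat.Coprime.pow_right _
      (Nat.coprime_comm.mp (hℓ.coprime_iff_not_dvd.mpr hdvd)))
  rwa [ZMod.natCast_val, ZMod.cast_id] at this

lemma cast_dvd_of_cast_eq_zero' {a b : ℕ} [NeZero b] (h : a ∣ b) (x : ZMod b)
    (hx : ZMod.castHom h (ZMod a) x = 0) : (a : ZMod b) ∣ x := by
  have : NeZero a := ⟨fun h0 => by subst h0; exact (NeZero.ne b) (Nat.eq_zero_of_zero_dvd h)⟩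
  rw [ZMod.castHom_apply, ← ZMod.natCast_val, ZMod.natCast_eq_zero_iff] at hx
  obtain ⟨c, hc⟩ := hx
  refine ⟨(c : ZMod b), ?_⟩
  have := congrArg (Nat.cast : ℕ → ZMod b) hc
  push_cast at this
  rw [← this, ZMod.natCast_val, ZMod.cast_id]

/-- Every element of `R(ℓ^(2m+1))` has square discriminant, and there is
no primitive vector that is a simultaneous eigenvector of all elements of `R(ℓ^(2m+1))`. -/
theorem stmt_11 (ℓ m : ℕ) (hℓ : ℓ.Prime) (hℓodd : ℓ ≠ 2) (hm : 1 ≤ m) :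
    (∀ g : Matrix.GeneralLinearGroup (Fin 2) (ZMod (ℓ ^ (2 * m + 1))),
      Rmem ℓ m g.val → ∃ s : ZMod (ℓ ^ (2 * m + 1)),
        (Matrix.trace g.val) ^ 2 - 4 * g.val.det = s ^ 2) ∧
    ¬ ∃ v : Fin 2 → ZMod (ℓ ^ (2 * m + 1)),
      IsPrimitive ℓ (ℓ ^ (2 * m + 1)) (dvd_pow_self ℓ (by omega : 2 * m + 1 ≠ 0)) v ∧
      ∀ g : Matrix.GeneralLinearGroup (Fin 2) (ZMod (ℓ ^ (2 * m + 1))),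
        Rmem ℓ m g.val → ∃ lam : ZMod (ℓ ^ (2 * m + 1)), g.val.mulVec v = lam • v := by
  haveI : Fact ℓ.Prime := ⟨hℓ⟩
  haveI : NeZero (ℓ ^ (2 * m + 1)) := ⟨pow_ne_zero _ hℓ.pos.ne'⟩
  haveI : Fact (1 < ℓ ^ (2 * m + 1)) := ⟨Nat.one_lt_pow (by omega) hℓ.one_lt⟩
  set L : ZMod (ℓ ^ (2 * m + 1)) := (ℓ : ZMod (ℓ ^ (2 * m + 1))) with hLdef
  have hL0 : L ^ (2 * m + 2) = 0 := by
    rw [hLdef, ← Nat.cast_pow, ZMod.natCast_eq_zero_iff]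
    exact pow_dvd_pow ℓ (by omega)
  have hL4 : L ^ (4 * m) = 0 := by
    rw [hLdef, ← Nat.cast_pow, ZMod.natCast_eq_zero_iff]
    exact pow_dvd_pow ℓ (by omega)
  constructor
  · intro g hmem
    obtain ⟨r, s, t, ε, hε, hg, hrt⟩ := hmem
    have hsub : ZMod.castHom (pow_dvd_pow ℓ (by omega : m + 1 ≤ 2 * m + 1))
        (ZMod (ℓ ^ (m + 1))) (r - t) = 0 := by
      rw [map_sub, hrt, sub_self]
    obtain ⟨c, hc⟩ := cast_dvd_of_cast_eq_zero' _ _ hsub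
    have hc' : r - t = L ^ (m + 1) * c := by rw [hc]; push_cast; ring
    rw [hg, Matrix.trace_fin_two_of, Matrix.det_fin_two_of]
    rcases hε with hε | hε <;> subst hε
    · exact ⟨2 * L ^ m * s, by linear_combination (r - t + L ^ (m+1) * c) * hc' + c^2 * hL0⟩
    · have hdet : IsUnit (g.val.det) := (Matrix.isUnit_iff_isUnit_det _).mp g.isUnit
      set φ := ZMod.castHom (dvd_pow_self ℓ (by omega : 2*m+1 ≠ 0)) (ZMod ℓ) with hφ
      have hφL : φ L = 0 := by rw [hLdef]; simp [φ]
      have hφdet : IsUnit (φ g.val.det) := hdet.map φ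
      have hφdet' : φ g.val.det = -(φ r * φ t) := by
        rw [hg, Matrix.det_fin_two_of]
        simp only [map_sub, map_mul, map_neg, map_one, map_pow, hφL, map_natCast, ZMod.natCast_self,
          zero_pow (by omega : 2*m ≠ 0)]
        ring
      have hφr : φ r ≠ 0 := by
        intro h0
        rw [hφdet', h0] at hφdet
        simp at hφdet
      have hφrt : φ r = φ t := by
        have := congrArg (ZMod.castHom (dvd_pow_self ℓ (Nat.succ_ne_zero m)) (ZMod ℓ)) hrt
        simpa only [← RingHom.comp_apply, ZMod.castHom_comp] using this
      have h2 : (2 : ZMod ℓ) ≠ 0 := by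
        have : ((2:ℕ) : ZMod ℓ) ≠ 0 := by
          rw [Ne, ZMod.natCast_eq_zero_iff]
          intro hd
          exact hℓodd ((Nat.prime_dvd_prime_iff_eq hℓ Nat.prime_two).mp hd)
        exact_mod_cast this
      have hunit : IsUnit (r + t) := by
        apply isUnit_of_cast_ne' hℓ (by omega : 2*m+1 ≠ 0)
        rw [map_add]
        rw [show ZMod.castHom (dvd_pow_self ℓ (by omega : 2*m+1 ≠ 0)) (ZMod ℓ) r = φ r from rfl,
          show ZMod.castHom (dvd_pow_self ℓ (by omega : 2*m+1 ≠ 0)) (ZMod ℓ) t = φ t from rfl,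
          ← hφrt, ← two_mul]
        exact mul_ne_zero h2 hφr
      obtain ⟨u, hu⟩ := hunit
      have hcu : (↑u⁻¹ : ZMod (ℓ ^ (2*m+1))) * (r + t) = 1 := by
        rw [← hu, Units.inv_mul]
      refine ⟨(r + t) - 2 * L ^ (2*m) * s^2 * ↑u⁻¹, ?_⟩
      linear_combination (4 * L ^ (2*m) * s^2) * hcu
        - 4*s^4*(↑u⁻¹:ZMod (ℓ^(2*m+1)))^2 * hL4
  · rintro ⟨v, hprim, hv⟩
    have hA : ∃ gA : GL (Fin 2) (ZMod (ℓ ^ (2*m+1))), gA.val = !![1, 0; 0, -1] := by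
      have h : (!![1, 0; 0, -1] : Matrix (Fin 2) (Fin 2) (ZMod (ℓ ^ (2*m+1)))).det = -1 := by
        simp [Matrix.det_fin_two_of]
      have i : Invertible (!![1, 0; 0, -1] :
          Matrix (Fin 2) (Fin 2) (ZMod (ℓ ^ (2*m+1)))).det :=
        ⟨-1, by rw [h]; ring, by rw [h]; ring⟩
      exact ⟨Matrix.GeneralLinearGroup.mk' _ i, rfl⟩
    have hL4' : L ^ (2*m) * L ^ (2*m) = 0 := by
      rw [← pow_add]
      rw [show 2*m + 2*m = 4*m by ring]
      exact hL4
    have hB : ∃ gB : GL (Fin 2) (ZMod (ℓ ^ (2*m+1))), gB.val = !![1, 1; L ^ (2*m), 1] := by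
      have h : (!![1, 1; L ^ (2*m), 1] :
          Matrix (Fin 2) (Fin 2) (ZMod (ℓ ^ (2*m+1)))).det = 1 - L ^ (2*m) := by
        simp [Matrix.det_fin_two_of]
      have i : Invertible (!![1, 1; L ^ (2*m), 1] :
          Matrix (Fin 2) (Fin 2) (ZMod (ℓ ^ (2*m+1)))).det :=
        ⟨1 + L ^ (2*m), by rw [h]; linear_combination -hL4', by rw [h]; linear_combination -hL4'⟩
      exact ⟨Matrix.GeneralLinearGroup.mk' _ i, rfl⟩
    obtain ⟨gA, hgA⟩ := hA
    obtain ⟨gB, hgB⟩ := hB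
    have hmemA : _ := hv gA ⟨1, 0, 1, -1, Or.inr rfl, by
        rw [hgA]
        congr 1
        rw [show (-1 : ZMod (ℓ ^ (2*m+1))) * L^(2*m) * 0 = 0 by ring,
          show (-1 : ZMod (ℓ ^ (2*m+1))) * 1 = -1 by ring], rfl⟩
    have hmemB : _ := hv gB ⟨1, 1, 1, 1, Or.inl rfl, by
        rw [hgB]
        congr 1
        rw [show (1 : ZMod (ℓ ^ (2*m+1))) * L^(2*m) * 1 = L^(2*m) by ring,
          show (1 : ZMod (ℓ ^ (2*m+1))) * 1 = 1 by ring], rfl⟩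
    obtain ⟨lam, hlam⟩ := hmemA
    obtain ⟨mu, hmu⟩ := hmemB
    rw [hgA] at hlam; rw [hgB] at hmu
    have ha0 := congrFun hlam 0
    have ha1 := congrFun hlam 1
    have hb0 := congrFun hmu 0
    have hb1 := congrFun hmu 1
    simp [Matrix.mulVec, dotProduct, Fin.sum_univ_two, Matrix.vecHead, Matrix.vecTail] at ha0 ha1 hb0 hb1
    have h2 : IsUnit (2 : ZMod (ℓ ^ (2*m+1))) := by
      apply isUnit_of_cast_ne' hℓ (by omega : 2*m+1 ≠ 0)
      rw [map_ofNat]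
      have : ((2:ℕ) : ZMod ℓ) ≠ 0 := by
        rw [Ne, ZMod.natCast_eq_zero_iff]
        exact fun hd => hℓodd ((Nat.prime_dvd_prime_iff_eq hℓ Nat.prime_two).mp hd)
      exact_mod_cast this
    have hL2m : L ^ (2*m) ≠ 0 := by
      rw [hLdef, ← Nat.cast_pow, Ne, ZMod.natCast_eq_zero_iff,
        Nat.pow_dvd_pow_iff_le_right hℓ.one_lt]
      omega
    obtain ⟨i, hi⟩ := Function.ne_iff.mp hprim
    fin_cases i
    · have hu0 : IsUnit (v 0) := isUnit_of_cast_ne' hℓ (by omega) _ hi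
      have hlam1 : lam = 1 := hu0.mul_right_cancel (by linear_combination -ha0)
      have hv1 : v 1 = 0 := by
        have : (2 : ZMod (ℓ ^ (2*m+1))) * v 1 = 2 * 0 := by
          rw [hlam1] at ha1; linear_combination -ha1
        exact h2.mul_left_cancel this
      have hmu1 : mu = 1 := hu0.mul_right_cancel (by rw [hv1] at hb0; linear_combination -hb0)
      have hzero : L ^ (2*m) * v 0 = 0 := by
        rw [hv1, hmu1] at hb1; linear_combination hb1
      exact hL2m (hu0.mul_right_cancel (by rw [hzero]; ring))
    · have hu1 : IsUnit (v 1) := isUnit_of_cast_ne' hℓ (by omega) _ hi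
      have hlamneg : lam = -1 := hu1.mul_right_cancel (by linear_combination -ha1)
      have hv0 : v 0 = 0 := by
        have : (2 : ZMod (ℓ ^ (2*m+1))) * v 0 = 2 * 0 := by
          rw [hlamneg] at ha0; linear_combination ha0
        exact h2.mul_left_cancel this
      have : v 1 = 0 := by rw [hv0] at hb0; linear_combination hb0
      exact hu1.ne_zero this
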